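/- Suppose for all pairs x ≤ v in a (crystallographic) Coxeter group, R_{xv}(1) = δ_{xv}, R'_{xv}(1) = 1 if x → v and 0 otherwise, and the alternating-sum identity Σ_{u ≤ v ≤ w} (−1)^{ℓ(u,v)} R_{uv}(q) R_{vw}(q) = δ_{uw} holds. If u →→ w (i.e., u < w and a(u,w) = 2), then R''_{uw}(1) = m(u,w), where m(u,w) = |{v ∈ [u,w] : u → v → w}|. -/

import Mathlib

open Polynomial
open scoped Classical

/-- Reflections of a Coxeter-like system: conjugates of elements of `S`. -/
def CoxReflections {W : Type*} [Group W] (S : Set W) : Set W :=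
  {t | ∃ s ∈ S, ∃ g : W, t = g⁻¹ * s * g}

/-- Bruhat graph edge: `v = x t` for a reflection `t`, with `ℓ x < ℓ v`. -/
def BruhatEdge {W : Type*} [Group W] (S : Set W) (ℓ : W → ℕ) (x v : W) : Prop :=
  (∃ t ∈ CoxReflections S, v = x * t) ∧ ℓ x < ℓ v

lemma not_bruhatEdge_self {W : Type*} [Group W] (S : Set W) (ℓ : W → ℕ) (x : W) :
    ¬ BruhatEdge S ℓ x x := fun h => lt_irrefl _ h.2

lemma eval_d1' (n : ℕ) (p q : Polynomial ℤ) :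
    Polynomial.eval 1 (derivative (((-1 : Polynomial ℤ))^n * (p * q))) =
      (-1:ℤ)^n * ((derivative p).eval 1 * q.eval 1 + p.eval 1 * (derivative q).eval 1) := by
  have h : ((-1 : Polynomial ℤ))^n = C ((-1:ℤ)^n) := by simp
  rw [h, derivative_C_mul]
  simp [derivative_mul]

lemma eval_d2' (n : ℕ) (p q : Polynomial ℤ) :
    Polynomial.eval 1 (derivative (derivative (((-1 : Polynomial ℤ))^n * (p * q)))) =
      (-1:ℤ)^n * ((derivative (derivative p)).eval 1 * q.eval 1
        + 2 * (derivative p).eval 1 * (derivative q).eval 1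
        + p.eval 1 * (derivative (derivative q)).eval 1) := by
  have h : ((-1 : Polynomial ℤ))^n = C ((-1:ℤ)^n) := by simp
  rw [h, derivative_C_mul, derivative_C_mul]
  simp [derivative_mul]
  ring

section Main
variable {W : Type*} [Group W] [PartialOrder W] [LocallyFiniteOrder W]
  (S : Set W) (ℓ : W → ℕ) (R : W → W → Polynomial ℤ)

lemma edge_sign
    (hedge_lt : ∀ x v : W, BruhatEdge S ℓ x v → x < v)
    (hR1 : ∀ x v : W, x ≤ v → (R x v).eval 1 = if x = v then 1 else 0)
    (hR'1 : ∀ x v : W, x ≤ v →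
      (BruhatEdge S ℓ x v → (Polynomial.derivative (R x v)).eval 1 = 1) ∧
      (¬ BruhatEdge S ℓ x v → (Polynomial.derivative (R x v)).eval 1 = 0))
    (halt : ∀ u w : W, u ≤ w →
      ∑ v ∈ Finset.Icc u w, ((-1 : Polynomial ℤ)) ^ (ℓ v - ℓ u) * (R u v * R v w)
        = if u = w then 1 else 0)
    (x v : W) (hxv : BruhatEdge S ℓ x v) :
    ((-1:ℤ)) ^ (ℓ v - ℓ x) = -1 := by
  have hlt : x < v := hedge_lt x v hxv
  have hne : x ≠ v := ne_of_lt hlt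
  have H := congrArg (fun p => Polynomial.eval 1 (Polynomial.derivative p)) (halt x v hlt.le)
  simp only [if_neg hne, map_sum, Polynomial.eval_finset_sum, derivative_zero, eval_zero] at H
  rw [Finset.sum_congr rfl (fun y hy => eval_d1' (ℓ y - ℓ x) (R x y) (R y v))] at H
  have key : ∀ y ∈ Finset.Icc x v,
      (-1:ℤ)^(ℓ y - ℓ x) * ((derivative (R x y)).eval 1 * (R y v).eval 1
        + (R x y).eval 1 * (derivative (R y v)).eval 1)
      = (if y = x then 1 else 0) + (if y = v then (-1:ℤ)^(ℓ v - ℓ x) else 0) := by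
    intro y hy
    obtain ⟨hxy, hyv⟩ := Finset.mem_Icc.mp hy
    by_cases h1 : y = x
    · subst h1
      rw [if_pos rfl, if_neg hne, hR1 y v hyv, if_neg hne, hR1 y y le_rfl, if_pos rfl,
        (hR'1 y y le_rfl).2 (not_bruhatEdge_self S ℓ y), (hR'1 y v hyv).1 hxv]
      simp
    · by_cases h2 : y = v
      · subst h2
        rw [if_neg h1, if_pos rfl, hR1 y y le_rfl, if_pos rfl, hR1 x y hxy,
          if_neg (Ne.symm h1), (hR'1 x y hxy).1 hxv,
          (hR'1 y y le_rfl).2 (not_bruhatEdge_self S ℓ y)]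
        ring
      · rw [if_neg h1, if_neg h2, hR1 x y hxy, if_neg (Ne.symm h1), hR1 y v hyv, if_neg h2]
        ring
  rw [Finset.sum_congr rfl key, Finset.sum_add_distrib,
    Finset.sum_ite_eq' (Finset.Icc x v) x (fun _ => (1:ℤ)),
    Finset.sum_ite_eq' (Finset.Icc x v) v (fun _ => (-1:ℤ)^(ℓ v - ℓ x)),
    if_pos (Finset.mem_Icc.mpr ⟨le_rfl, hlt.le⟩),
    if_pos (Finset.mem_Icc.mpr ⟨hlt.le, le_rfl⟩)] at H
  linarith

end Main

/-- If `R_{xv}(1) = δ_{xv}`, `R'_{xv}(1)` is the edge indicator, and the alternating-sum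
identity `∑_{u ≤ v ≤ w} (-1)^{ℓ(u,v)} R_{uv} R_{vw} = δ_{uw}` holds, then for `u →→ w`
(i.e. `u < w` with absolute length 2) one has `R''_{uw}(1) = m(u,w)`, the number of
`v ∈ [u,w]` with `u → v → w`. -/
theorem second_derivative_eq_m {W : Type*} [Group W] [PartialOrder W]
    [LocallyFiniteOrder W] (S : Set W) (ℓ : W → ℕ) (R : W → W → Polynomial ℤ)
    (hedge_lt : ∀ x v : W, BruhatEdge S ℓ x v → x < v)
    (hR1 : ∀ x v : W, x ≤ v → (R x v).eval 1 = if x = v then 1 else 0)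
    (hR'1 : ∀ x v : W, x ≤ v →
      (BruhatEdge S ℓ x v → (Polynomial.derivative (R x v)).eval 1 = 1) ∧
      (¬ BruhatEdge S ℓ x v → (Polynomial.derivative (R x v)).eval 1 = 0))
    (halt : ∀ u w : W, u ≤ w →
      ∑ v ∈ Finset.Icc u w, ((-1 : Polynomial ℤ)) ^ (ℓ v - ℓ u) * (R u v * R v w)
        = if u = w then 1 else 0)
    (u w : W) (huw : u < w) (hnotedge : ¬ BruhatEdge S ℓ u w)
    (hpath2 : ∃ v : W, BruhatEdge S ℓ u v ∧ BruhatEdge S ℓ v w) :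
    (Polynomial.derivative (Polynomial.derivative (R u w))).eval 1
      = (((Finset.Icc u w).filter
          (fun v => BruhatEdge S ℓ u v ∧ BruhatEdge S ℓ v w)).card : ℤ) := by
  have hne : u ≠ w := ne_of_lt huw
  set D : ℤ := (Polynomial.derivative (Polynomial.derivative (R u w))).eval 1 with hD
  -- the sign (-1)^(ℓ w - ℓ u) is +1
  obtain ⟨v0, hv01, hv02⟩ := hpath2
  have hs1 : ((-1:ℤ)) ^ (ℓ v0 - ℓ u) = -1 := edge_sign S ℓ R hedge_lt hR1 hR'1 halt u v0 hv01
  have hs2 : ((-1:ℤ)) ^ (ℓ w - ℓ v0) = -1 := edge_sign S ℓ R hedge_lt hR1 hR'1 halt v0 w hv02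
  have hsplit : ℓ w - ℓ u = (ℓ w - ℓ v0) + (ℓ v0 - ℓ u) := by
    have h1 : ℓ u < ℓ v0 := hv01.2
    have h2 : ℓ v0 < ℓ w := hv02.2
    omega
  have hsign : ((-1:ℤ)) ^ (ℓ w - ℓ u) = 1 := by
    rw [hsplit, pow_add, hs1, hs2]; ring
  have H := congrArg
    (fun p => Polynomial.eval 1 (Polynomial.derivative (Polynomial.derivative p)))
    (halt u w huw.le)
  simp only [if_neg hne, map_sum, Polynomial.eval_finset_sum, derivative_zero, eval_zero] at H
  rw [Finset.sum_congr rfl (fun y hy => eval_d2' (ℓ y - ℓ u) (R u y) (R y w))] at H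
  have key : ∀ y ∈ Finset.Icc u w,
      (-1:ℤ)^(ℓ y - ℓ u) * ((derivative (derivative (R u y))).eval 1 * (R y w).eval 1
        + 2 * (derivative (R u y)).eval 1 * (derivative (R y w)).eval 1
        + (R u y).eval 1 * (derivative (derivative (R y w))).eval 1)
      = (if y = u then D else 0) + (if y = w then D else 0)
        + (if BruhatEdge S ℓ u y ∧ BruhatEdge S ℓ y w then (-2:ℤ) else 0) := by
    intro y hy
    obtain ⟨huy, hyw⟩ := Finset.mem_Icc.mp hy
    by_cases h1 : y = u
    · subst h1
      rw [if_pos rfl, if_neg hne,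
        if_neg (fun h => not_bruhatEdge_self S ℓ y h.1),
        hR1 y w hyw, if_neg hne, hR1 y y le_rfl, if_pos rfl,
        (hR'1 y y le_rfl).2 (not_bruhatEdge_self S ℓ y)]
      simp [hD]
    · by_cases h2 : y = w
      · subst h2
        rw [if_neg h1, if_pos rfl,
          if_neg (fun h => not_bruhatEdge_self S ℓ y h.2),
          hR1 y y le_rfl, if_pos rfl, hR1 u y huy, if_neg (Ne.symm h1),
          (hR'1 y y le_rfl).2 (not_bruhatEdge_self S ℓ y), hsign]
        ring
      · rw [if_neg h1, if_neg h2, hR1 u y huy, if_neg (Ne.symm h1),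
          hR1 y w hyw, if_neg h2]
        by_cases h3 : BruhatEdge S ℓ u y ∧ BruhatEdge S ℓ y w
        · rw [if_pos h3, (hR'1 u y huy).1 h3.1, (hR'1 y w hyw).1 h3.2,
            edge_sign S ℓ R hedge_lt hR1 hR'1 halt u y h3.1]
          ring
        · rw [if_neg h3]
          rcases not_and_or.mp h3 with h4 | h4
          · rw [(hR'1 u y huy).2 h4]; ring
          · rw [(hR'1 y w hyw).2 h4]; ring
  rw [Finset.sum_congr rfl key, Finset.sum_add_distrib, Finset.sum_add_distrib,
    Finset.sum_ite_eq' (Finset.Icc u w) u (fun _ => D),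
    Finset.sum_ite_eq' (Finset.Icc u w) w (fun _ => D),
    if_pos (Finset.mem_Icc.mpr ⟨le_rfl, huw.le⟩),
    if_pos (Finset.mem_Icc.mpr ⟨huw.le, le_rfl⟩),
    ← Finset.sum_filter, Finset.sum_const, nsmul_eq_mul] at H
  linarith
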